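/- Let Σ be a finite set and let c_1,…,c_n : Σ → ℂ be functions that are linearly independent as elements of the space of complex-valued functions on Σ. Fix an integer a ≥ 1 and let 𝒜 be any family of a-element subsets A of {1,…,n} such that for every A ∈ 𝒜 the supports of the functions c_i, i ∈ A, are pairwise disjoint. Then the family of localized a-magnon states (Φ_A)_{A ∈ 𝒜} is linearly independent in H_a. (Theorem 1: if the set of 1-magnon states is linearly independent, then so is the set of a-magnon states for all a.) -/

import Mathlib

/-- The localized `a`-magnon product state `Φ(c_1,…,c_a)` as a function on finite subsets
of `Σ` (an element of `H_a`): `Φ(S) = ∑_g ∏_j c_j (g j)`, the sum running over all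
injections `g` from the index set onto `S` (i.e. bijections onto `S`). -/
noncomputable def magnon {σ : Type*} [Fintype σ] [DecidableEq σ]
    {ι : Type*} [Fintype ι] [DecidableEq ι] (c : ι → σ → ℂ) : Finset σ → ℂ :=
  fun S => ∑ g : ι → σ,
    if Function.Injective g ∧ Finset.image g Finset.univ = S then ∏ j, c j (g j) else 0

/-- For an `a`-element subset `A ⊆ {1,…,n}` of indices, `Φ_A := Φ((c_i)_{i ∈ A})`,
well defined since `Φ` is symmetric in its arguments. -/
noncomputable def magnonSet {σ : Type*} [Fintype σ] [DecidableEq σ] {n : ℕ}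
    (c : Fin n → σ → ℂ) (A : Finset (Fin n)) : Finset σ → ℂ :=
  magnon (fun i : ↥A => c i.1)

open Finset Function

section equivOf
variable {σ ι κ : Type*} [Fintype σ] [DecidableEq σ]
    [Fintype ι] [DecidableEq ι] [Fintype κ] [DecidableEq κ]

lemma range_eq_of_image_univ_eq {g : ι → σ} {h : κ → σ}
    (himg : Finset.image h Finset.univ = Finset.image g Finset.univ) :
    Set.range h = Set.range g := by
  have := congrArg (fun s : Finset σ => (s : Set σ)) himg
  simpa using this

/-- from `h` injective with the same image as injective `g`, produce the equivalence
`π` with `g ∘ π = h`. -/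
noncomputable def equivOf (g : ι → σ) (hg : Function.Injective g) (h : κ → σ)
    (hh : Function.Injective h)
    (himg : Finset.image h Finset.univ = Finset.image g Finset.univ) : κ ≃ ι :=
  (Equiv.ofInjective h hh).trans
    ((Equiv.setCongr (range_eq_of_image_univ_eq himg)).trans (Equiv.ofInjective g hg).symm)

lemma comp_equivOf (g : ι → σ) (hg : Function.Injective g) (h : κ → σ)
    (hh : Function.Injective h)
    (himg : Finset.image h Finset.univ = Finset.image g Finset.univ) :
    g ∘ (equivOf g hg h hh himg) = h := by
  funext j
  simp only [equivOf, Function.comp_apply, Equiv.trans_apply]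
  rw [Equiv.apply_ofInjective_symm hg]
  simp [Equiv.ofInjective_apply]

lemma sum_same_image_eq_sum_equiv (g : ι → σ) (hg : Function.Injective g) (F : (κ → σ) → ℂ) :
    (∑ h : κ → σ, if Function.Injective h ∧
        Finset.image h Finset.univ = Finset.image g Finset.univ then F h else 0)
      = ∑ π : κ ≃ ι, F (g ∘ π) := by
  classical
  rw [← Finset.sum_filter]
  refine Finset.sum_bij'
    (i := fun h hh => equivOf g hg h (Finset.mem_filter.mp hh).2.1 (Finset.mem_filter.mp hh).2.2)
    (j := fun π _ => g ∘ π) ?_ ?_ ?_ ?_ ?_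
  · intro π _; exact Finset.mem_univ _
  · intro π _
    refine Finset.mem_filter.mpr ⟨Finset.mem_univ _, hg.comp π.injective, ?_⟩
    rw [← Finset.image_image, Finset.image_univ_equiv]
  · intro h hh
    exact comp_equivOf g hg h _ _
  · intro π hπ
    ext j
    apply hg
    have := congrFun (comp_equivOf g hg (g ∘ π) (hg.comp π.injective)
      (by rw [← Finset.image_image, Finset.image_univ_equiv])) j
    -- this : (g ∘ equivOf ...) j = (g ∘ π) j
    exact this
  · intro h hh
    rw [comp_equivOf]
end equivOf


lemma magnon_key {σ : Type*} [Fintype σ] [DecidableEq σ] {n : ℕ}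
    (c D : Fin n → σ → ℂ)
    (hD : ∀ i j : Fin n, ∑ μ : σ, c i μ * D j μ = if i = j then 1 else 0)
    (A B : Finset (Fin n)) (hAB : A.card = B.card)
    (hdisjA : ∀ i ∈ A, ∀ j ∈ A, i ≠ j →
      Disjoint (Function.support (c i)) (Function.support (c j))) :
    (∑ h : ↥B → σ, (if Function.Injective h then (1:ℂ) else 0) *
        magnonSet c A (Finset.image h Finset.univ) * ∏ j : ↥B, D j.1 (h j))
      = if A = B then 1 else 0 := by
  classical
  have step0 : ∀ h : ↥B → σ,
      (if Function.Injective h then (1:ℂ) else 0) *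
        magnonSet c A (Finset.image h Finset.univ) * ∏ j : ↥B, D j.1 (h j)
      = ∑ g : ↥A → σ, (if Function.Injective g then
          (if Function.Injective h ∧
              Finset.image h Finset.univ = Finset.image g Finset.univ then
            (∏ i : ↥A, c i.1 (g i)) * ∏ j : ↥B, D j.1 (h j) else 0) else 0) := by
    intro h
    simp only [magnonSet, magnon]
    rw [Finset.mul_sum, Finset.sum_mul]
    refine Finset.sum_congr rfl fun g _ => ?_
    by_cases h1 : Function.Injective h <;> by_cases h2 : Function.Injective g <;>
      by_cases h3 : Finset.image g Finset.univ = Finset.image h Finset.univ <;>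
      simp [h1, h2, h3, mul_comm, mul_assoc] <;>
      exact if_congr eq_comm rfl rfl
  have step1 : (∑ h : ↥B → σ, (if Function.Injective h then (1:ℂ) else 0) *
        magnonSet c A (Finset.image h Finset.univ) * ∏ j : ↥B, D j.1 (h j))
      = ∑ g : ↥A → σ, if Function.Injective g then
          (∑ h : ↥B → σ, if Function.Injective h ∧
              Finset.image h Finset.univ = Finset.image g Finset.univ then
            (∏ i : ↥A, c i.1 (g i)) * ∏ j : ↥B, D j.1 (h j) else 0) else 0 := by
    simp only [step0]
    rw [Finset.sum_comm]
    refine Finset.sum_congr rfl fun g _ => ?_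
    by_cases hg : Function.Injective g
    · simp only [if_pos hg]
    · simp only [if_neg hg, Finset.sum_const_zero]
  rw [step1]
  have step2 : ∀ g : ↥A → σ, Function.Injective g →
      (∑ h : ↥B → σ, if Function.Injective h ∧
          Finset.image h Finset.univ = Finset.image g Finset.univ then
        (∏ i : ↥A, c i.1 (g i)) * ∏ j : ↥B, D j.1 (h j) else 0)
      = ∑ π : ↥B ≃ ↥A, ∏ i : ↥A, (c i.1 (g i) * D (π.symm i).1 (g i)) := by
    intro g hg
    rw [sum_same_image_eq_sum_equiv g hg
      (fun h => (∏ i : ↥A, c i.1 (g i)) * ∏ j : ↥B, D j.1 (h j))]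
    refine Finset.sum_congr rfl fun π _ => ?_
    rw [Finset.prod_mul_distrib]
    congr 1
    rw [← Equiv.prod_comp π (fun i => D (π.symm i).1 (g i))]
    exact Finset.prod_congr rfl fun j _ => by simp
  have vanish : ∀ g : ↥A → σ, ¬Function.Injective g → ∀ π : ↥B ≃ ↥A,
      ∏ i : ↥A, (c i.1 (g i) * D (π.symm i).1 (g i)) = 0 := by
    intro g hg π
    rw [Function.not_injective_iff] at hg
    obtain ⟨i, i', heq, hne⟩ := hg
    have hcc : c i.1 (g i) = 0 ∨ c i'.1 (g i') = 0 := by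
      by_contra hcon
      push_neg at hcon
      have hd := hdisjA i.1 i.2 i'.1 i'.2 (fun hh => hne (Subtype.ext hh))
      have m1 : g i ∈ Function.support (c i.1) := Function.mem_support.mpr hcon.1
      have m2 : g i ∈ Function.support (c i'.1) := by
        rw [heq]; exact Function.mem_support.mpr hcon.2
      exact Set.disjoint_left.mp hd m1 m2
    cases hcc with
    | inl h0 => exact Finset.prod_eq_zero (Finset.mem_univ i) (by rw [h0, zero_mul])
    | inr h0 => exact Finset.prod_eq_zero (Finset.mem_univ i') (by rw [h0, zero_mul])
  calc (∑ g : ↥A → σ, if Function.Injective g then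
          (∑ h : ↥B → σ, if Function.Injective h ∧
              Finset.image h Finset.univ = Finset.image g Finset.univ then
            (∏ i : ↥A, c i.1 (g i)) * ∏ j : ↥B, D j.1 (h j) else 0) else 0)
      = ∑ g : ↥A → σ, ∑ π : ↥B ≃ ↥A, ∏ i : ↥A, (c i.1 (g i) * D (π.symm i).1 (g i)) := by
        refine Finset.sum_congr rfl fun g _ => ?_
        by_cases hg : Function.Injective g
        · rw [if_pos hg, step2 g hg]
        · rw [if_neg hg]
          exact (Finset.sum_eq_zero fun π _ => vanish g hg π).symm
    _ = ∑ π : ↥B ≃ ↥A, ∑ g : ↥A → σ, ∏ i : ↥A, (c i.1 (g i) * D (π.symm i).1 (g i)) :=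
        Finset.sum_comm
    _ = ∑ π : ↥B ≃ ↥A, ∏ i : ↥A, ∑ μ : σ, c i.1 μ * D (π.symm i).1 μ := by
        refine Finset.sum_congr rfl fun π _ => ?_
        exact (Fintype.prod_sum (f := fun (i : ↥A) (μ : σ) => c i.1 μ * D (π.symm i).1 μ)).symm
    _ = ∑ π : ↥B ≃ ↥A, if (∀ i : ↥A, (π.symm i).1 = i.1) then 1 else 0 := by
        refine Finset.sum_congr rfl fun π _ => ?_
        simp_rw [hD]
        rw [Fintype.prod_boole]
        exact if_congr (forall_congr' fun i => eq_comm) rfl rfl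
    _ = if A = B then 1 else 0 := by
        by_cases hE : A = B
        · subst hE
          rw [if_pos rfl]
          have hcond : ∀ π : ↥A ≃ ↥A,
              (∀ i : ↥A, (π.symm i).1 = i.1) ↔ π = Equiv.refl ↥A := by
            intro π
            constructor
            · intro hp
              have h2 : ∀ i, π.symm i = i := fun i => Subtype.ext (hp i)
              refine Equiv.ext fun x => ?_
              have := h2 (π x)
              rw [Equiv.symm_apply_apply] at this
              exact this.symm
            · rintro rfl i; rfl
          calc (∑ π : ↥A ≃ ↥A, if (∀ i : ↥A, (π.symm i).1 = i.1) then (1:ℂ) else 0)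
              = ∑ π : ↥A ≃ ↥A, if π = Equiv.refl ↥A then (1:ℂ) else 0 :=
                Finset.sum_congr rfl fun π _ => if_congr (hcond π) rfl rfl
            _ = 1 := by simp
        · rw [if_neg hE]
          refine Finset.sum_eq_zero fun π _ => ?_
          rw [if_neg]
          intro hp
          apply hE
          refine Finset.eq_of_subset_of_card_le (fun x hx => ?_) hAB.ge
          have h1 := hp ⟨x, hx⟩
          have h2 := (π.symm ⟨x, hx⟩).2
          rw [h1] at h2
          exact h2


lemma exists_dual {σ : Type*} [Fintype σ] [DecidableEq σ] {n : ℕ}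
    (c : Fin n → σ → ℂ) (hc : LinearIndependent ℂ c) :
    ∃ D : Fin n → σ → ℂ, ∀ i j : Fin n, ∑ μ : σ, c i μ * D j μ = if i = j then 1 else 0 := by
  classical
  obtain ⟨g0, hg0⟩ := (Finsupp.linearCombination ℂ c).exists_leftInverse_of_injective
    (LinearMap.ker_eq_bot.mpr hc)
  refine ⟨fun j μ => g0 (fun ν => if μ = ν then 1 else 0) j, fun i j => ?_⟩
  calc ∑ μ : σ, c i μ * (g0 (fun ν => if μ = ν then (1:ℂ) else 0)) j
      = ∑ μ : σ, ((c i μ • g0 (fun ν => if μ = ν then (1:ℂ) else 0)) j) := by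
        simp [Finsupp.smul_apply, smul_eq_mul]
    _ = (∑ μ : σ, c i μ • g0 (fun ν => if μ = ν then (1:ℂ) else 0)) j := by
        rw [Finsupp.finset_sum_apply]
    _ = (g0 (∑ μ : σ, c i μ • fun ν => if μ = ν then (1:ℂ) else 0)) j := by
        rw [map_sum]
        simp_rw [map_smul]
    _ = (g0 (c i)) j := by rw [← pi_eq_sum_univ (c i)]
    _ = (Finsupp.single i (1:ℂ)) j := by
        have hci : c i = Finsupp.linearCombination ℂ c (Finsupp.single i 1) := by simp
        rw [hci]
        have := LinearMap.congr_fun hg0 (Finsupp.single i (1:ℂ))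
        simp only [LinearMap.coe_comp, Function.comp_apply, LinearMap.id_coe, id_eq] at this
        rw [this]
    _ = if i = j then 1 else 0 := Finsupp.single_apply


/-- Theorem 1: if the 1-magnon states `c_1,…,c_n` are linearly independent, then for any
`a ≥ 1` and any family `𝒜` of `a`-element index sets whose members have pairwise disjoint
supports, the family of localized `a`-magnon states `(Φ_A)_{A ∈ 𝒜}` is linearly
independent in `H_a`. -/
theorem magnon_linearIndependent_of_linearIndependent
    {σ : Type*} [Fintype σ] [DecidableEq σ] {n a : ℕ} (ha : 1 ≤ a)
    (c : Fin n → σ → ℂ) (hc : LinearIndependent ℂ c)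
    (𝒜 : Finset (Finset (Fin n)))
    (hcard : ∀ A ∈ 𝒜, A.card = a)
    (hdisj : ∀ A ∈ 𝒜, ∀ i ∈ A, ∀ j ∈ A, i ≠ j →
      Disjoint (Function.support (c i)) (Function.support (c j))) :
    LinearIndependent ℂ (fun A : 𝒜 => magnonSet c A.1) := by
  classical
  obtain ⟨D, hD⟩ := exists_dual c hc
  rw [Fintype.linearIndependent_iff]
  intro f hsum B
  have hsum' : (∑ A : ↥𝒜, f A • magnonSet c A.1) = 0 := by simpa using hsum
  have key' := fun (As : Finset (Fin n)) (hAs : As ∈ 𝒜) => magnon_key c D hD As B.1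
    (by rw [hcard As hAs, hcard B.1 B.2]) (hdisj As hAs)
  have h1 : (0:ℂ) = f B := by
    calc (0:ℂ)
        = ∑ h : ↥(B.1) → σ, (if Function.Injective h then (1:ℂ) else 0) *
            ((∑ A : ↥𝒜, f A • magnonSet c A.1) (Finset.image h Finset.univ)) *
            ∏ j : ↥(B.1), D j.1 (h j) := by
          rw [hsum']
          simp
      _ = ∑ A : ↥𝒜, f A * ∑ h : ↥(B.1) → σ, (if Function.Injective h then (1:ℂ) else 0) *
            magnonSet c A.1 (Finset.image h Finset.univ) * ∏ j : ↥(B.1), D j.1 (h j) := by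
          simp only [Finset.sum_apply, Pi.smul_apply, smul_eq_mul, Finset.sum_mul,
            Finset.mul_sum]
          rw [Finset.sum_comm]
          exact Finset.sum_congr rfl fun A _ => Finset.sum_congr rfl fun h _ => by ring
      _ = ∑ A : ↥𝒜, f A * (if A.1 = B.1 then 1 else 0) := by
          refine Finset.sum_congr rfl fun A _ => ?_
          rw [key' A.1 A.2]
      _ = f B := by
          have hterm : ∀ A : ↥𝒜, (f A * if A.1 = B.1 then (1:ℂ) else 0)
              = if A = B then f A else 0 := by
            intro A
            by_cases hE : A = B
            · subst hE; simp
            · rw [if_neg hE, if_neg (fun hh => hE (Subtype.ext hh)), mul_zero]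
          simp_rw [hterm]
          simp
  exact h1.symm
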